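/- Let Π_act be the all-active policy class. Then for every deterministic MDP M over (S, A) and every layer h ∈ [H], the cumulative reachability satisfies C^reach_h(Π_act; M) ≤ h(h−1) + 2; consequently the spanning capacity satisfies 𝔠(Π_act) ≤ H(H−1) + 2. -/

import Mathlib

/-- A deterministic MDP over a layered state space. -/
structure DetMDP (S : ℕ → Type) (A : Type) where
  start : S 0
  step : ∀ h : ℕ, S h → A → S (h + 1)

/-- The trajectory of a policy in a deterministic MDP. -/
def DetMDP.traj {S : ℕ → Type} {A : Type} (M : DetMDP S A) (π : ∀ h : ℕ, S h → A) :
    ∀ h : ℕ, S h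
  | 0 => M.start
  | h + 1 => M.step h (M.traj π h) (π h (M.traj π h))

/-- Reachability of a state-action pair at layer `h` by the class `P` in `M`. -/
def Reachable {S : ℕ → Type} {A : Type} (M : DetMDP S A) (P : Set (∀ h : ℕ, S h → A))
    (h : ℕ) (s : S h) (a : A) : Prop :=
  ∃ π ∈ P, M.traj π h = s ∧ π h s = a

/-- Cumulative reachability at layer `h`. -/
noncomputable def Creach {S : ℕ → Type} {A : Type} (M : DetMDP S A)
    (P : Set (∀ h : ℕ, S h → A)) (h : ℕ) : ℕ :=
  Set.ncard {p : S h × A | Reachable M P h p.1 p.2}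

/-- Spanning capacity of `P` with horizon `H`. -/
noncomputable def spanCap (H : ℕ) (S : ℕ → Type) (A : Type)
    (P : Set (∀ h : ℕ, S h → A)) : ℕ :=
  sSup {n : ℕ | ∃ h < H, ∃ M : DetMDP S A, n = Creach M P h}

/-- The all-active policy class over the grid state space with `K + 1` states per layer and
binary actions: the union over `j` of the classes `Π^j_act`, where a policy of `Π^j_act`
plays `b h` on the state `s_(j,h)` of each layer `h` (for some bit sequence `b`) and
action `0` (`false`) on every other state. -/
def allActiveClass (K : ℕ) : Set (∀ _ : ℕ, Fin (K + 1) → Bool) :=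
  {π | ∃ j : Fin (K + 1), ∃ b : ℕ → Bool, π = fun h s => if s = j then b h else false}

namespace AllActiveAux

variable {K : ℕ}

/-- The all-`false` trajectory. -/
def tau (M : DetMDP (fun _ => Fin (K + 1)) Bool) : ℕ → Fin (K + 1)
  | 0 => M.start
  | t + 1 => M.step t (tau M t) false

/-- Overapproximation of states reachable by `Π^j` at layer `t`. -/
def R (M : DetMDP (fun _ => Fin (K + 1)) Bool) (j : Fin (K + 1)) : ℕ → Finset (Fin (K + 1))
  | 0 => {M.start}
  | t + 1 => (R M j t).image (fun s => M.step t s false) ∪ {M.step t j true}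

lemma card_R (M : DetMDP (fun _ => Fin (K + 1)) Bool) (j : Fin (K + 1)) :
    ∀ t, (R M j t).card ≤ t + 1 := by
  intro t
  induction t with
  | zero => simp [R]
  | succ t ih =>
    calc (R M j (t + 1)).card ≤ ((R M j t).image (fun s => M.step t s false)).card + 1 := by
          simpa [R] using Finset.card_union_le ((R M j t).image (fun s => M.step t s false)) {M.step t j true}
      _ ≤ (R M j t).card + 1 := by
          exact Nat.add_le_add_right (Finset.card_image_le) 1
      _ ≤ t + 1 + 1 := Nat.add_le_add_right ih 1

lemma tau_mem_R (M : DetMDP (fun _ => Fin (K + 1)) Bool) (j : Fin (K + 1)) :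
    ∀ t, tau M t ∈ R M j t := by
  intro t
  induction t with
  | zero => simp [R, tau]
  | succ t ih =>
    simp only [R, tau, Finset.mem_union, Finset.mem_image]
    exact Or.inl ⟨tau M t, ih, rfl⟩

lemma traj_mem_R (M : DetMDP (fun _ => Fin (K + 1)) Bool) (j : Fin (K + 1)) (b : ℕ → Bool) :
    ∀ t, M.traj (fun h s => if s = j then b h else false) t ∈ R M j t := by
  intro t
  induction t with
  | zero => simp [R, DetMDP.traj]
  | succ t ih =>
    set π : ∀ _ : ℕ, Fin (K + 1) → Bool := fun h s => if s = j then b h else false with hπ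
    show M.step t (M.traj π t) (π t (M.traj π t)) ∈ R M j (t + 1)
    simp only [R, Finset.mem_union, Finset.mem_image, Finset.mem_singleton]
    by_cases hsj : M.traj π t = j
    · cases hb : b t with
      | false =>
        left
        refine ⟨M.traj π t, ih, ?_⟩
        have hv : π t (M.traj π t) = false := by
          rw [hsj]; show (if j = j then b t else false) = false; rw [if_pos rfl, hb]
        rw [hv]
      | true =>
        right
        have hv : π t (M.traj π t) = true := by
          rw [hsj]; show (if j = j then b t else false) = true; rw [if_pos rfl, hb]
        rw [hv, hsj]
    · left
      refine ⟨M.traj π t, ih, ?_⟩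
      have hv : π t (M.traj π t) = false := if_neg hsj
      rw [hv]

lemma deviation (M : DetMDP (fun _ => Fin (K + 1)) Bool) (j : Fin (K + 1)) (b : ℕ → Bool) :
    ∀ h, M.traj (fun h s => if s = j then b h else false) h ≠ tau M h → ∃ t < h, tau M t = j := by
  intro h
  induction h with
  | zero => intro hne; exact absurd rfl hne
  | succ h ih =>
    intro hne
    by_cases hh : M.traj (fun h s => if s = j then b h else false) h = tau M h
    · set π : ∀ _ : ℕ, Fin (K + 1) → Bool := fun h s => if s = j then b h else false with hπ
      have hstep : M.traj π (h + 1) = M.step h (tau M h) (π h (tau M h)) := by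
        show M.step h (M.traj π h) (π h (M.traj π h)) = _
        rw [hh]
      have : π h (tau M h) ≠ false := by
        intro hfalse
        apply hne
        rw [hstep, hfalse]
        rfl
      have htj : tau M h = j := by
        by_contra hc
        exact this (by simp [hπ, hc])
      exact ⟨h, Nat.lt_succ_self h, htj⟩
    · obtain ⟨t, ht, htj⟩ := ih hh
      exact ⟨t, Nat.lt_succ_of_lt ht, htj⟩

end AllActiveAux

open AllActiveAux in
/-- For the all-active class `Π_act`: in every deterministic MDP the
cumulative reachability at (`0`-indexed) layer `h` is at most `(h+1)·h + 2` (paper: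
`h(h−1) + 2` for the `1`-indexed layer); consequently `𝔠(Π_act) ≤ H·(H−1) + 2`. -/
theorem allActive_spanning (K H : ℕ) (hH : 1 ≤ H) :
    (∀ M : DetMDP (fun _ => Fin (K + 1)) Bool, ∀ h < H,
        Creach M (allActiveClass K) h ≤ (h + 1) * h + 2) ∧
      spanCap H (fun _ => Fin (K + 1)) Bool (allActiveClass K) ≤ H * (H - 1) + 2 := by
  have main : ∀ M : DetMDP (fun _ => Fin (K + 1)) Bool, ∀ h : ℕ,
      Creach M (allActiveClass K) h ≤ (h + 1) * h + 2 := by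
    intro M h
    classical
    set E : Finset (Fin (K + 1) × Bool) :=
      ({(tau M h, false), (tau M h, true)} : Finset (Fin (K + 1) × Bool)) ∪
        (Finset.range h).biUnion (fun t =>
          ((R M (tau M t) h).erase (tau M h)).image (fun s => (s, false)) ∪
            {(tau M t, true)}) with hE
    have hsub : {p : Fin (K + 1) × Bool | Reachable M (allActiveClass K) h p.1 p.2} ⊆ ↑E := by
      rintro ⟨s, a⟩ ⟨π, ⟨j, b, rfl⟩, htraj, hact⟩
      simp only [hE, Finset.coe_union, Set.mem_union, Finset.coe_biUnion,
        Finset.coe_insert, Finset.coe_singleton, Set.mem_insert_iff, Set.mem_singleton_iff,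
        Set.mem_iUnion, Finset.mem_coe, Finset.mem_range, Finset.mem_union,
        Finset.mem_image, Finset.mem_erase, Finset.mem_singleton]
      by_cases hst : s = tau M h
      · left
        cases a with
        | false => left; rw [hst]
        | true => right; rw [hst]
      · right
        have hs1 : M.traj (fun h s => if s = j then b h else false) h = s := htraj
        have hact' : (if s = j then b h else false) = a := hact
        obtain ⟨t, ht, htj⟩ := deviation M j b h (by rw [hs1]; exact hst)
        refine ⟨t, ht, ?_⟩
        have hsR : s ∈ R M j h := hs1 ▸ traj_mem_R M j b h
        rw [← htj] at hsR
        cases a with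
        | false =>
          left
          exact ⟨s, ⟨hst, hsR⟩, rfl⟩
        | true =>
          right
          have hsj : s = j := by
            by_contra hc
            rw [if_neg hc] at hact'
            exact Bool.false_ne_true hact'
          rw [Prod.ext_iff]
          exact ⟨by rw [hsj, ← htj], rfl⟩
    have hcard : E.card ≤ (h + 1) * h + 2 := by
      calc E.card ≤ ({(tau M h, false), (tau M h, true)} : Finset (Fin (K + 1) × Bool)).card +
            ((Finset.range h).biUnion (fun t =>
              ((R M (tau M t) h).erase (tau M h)).image (fun s => (s, false)) ∪
                {(tau M t, true)})).card := Finset.card_union_le _ _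
        _ ≤ 2 + ∑ t ∈ Finset.range h,
              (((R M (tau M t) h).erase (tau M h)).image (fun s => (s, false)) ∪
                ({(tau M t, true)} : Finset (Fin (K + 1) × Bool))).card := by
            refine Nat.add_le_add ?_ (Finset.card_biUnion_le)
            exact (Finset.card_insert_le _ _).trans (by simp)
        _ ≤ 2 + ∑ t ∈ Finset.range h, (h + 1) := by
            refine Nat.add_le_add_left (Finset.sum_le_sum ?_) 2
            intro t _
            calc (((R M (tau M t) h).erase (tau M h)).image (fun s => (s, false)) ∪
                  ({(tau M t, true)} : Finset (Fin (K + 1) × Bool))).card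
                ≤ (((R M (tau M t) h).erase (tau M h)).image
                    (fun s => ((s, false) : Fin (K+1) × Bool))).card + 1 := by
                  simpa using Finset.card_union_le _ _
              _ ≤ ((R M (tau M t) h).erase (tau M h)).card + 1 :=
                  Nat.add_le_add_right Finset.card_image_le 1
              _ = (R M (tau M t) h).card - 1 + 1 := by
                  rw [Finset.card_erase_of_mem (tau_mem_R M (tau M t) h)]
              _ ≤ h + 1 := by
                  have := card_R M (tau M t) h
                  omega
        _ = 2 + h * (h + 1) := by rw [Finset.sum_const, Finset.card_range, smul_eq_mul]
        _ = (h + 1) * h + 2 := by ring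
    calc Creach M (allActiveClass K) h ≤ (↑E : Set (Fin (K + 1) × Bool)).ncard :=
          Set.ncard_le_ncard hsub E.finite_toSet
      _ = E.card := Set.ncard_coe_finset E
      _ ≤ (h + 1) * h + 2 := hcard
  refine ⟨fun M h _ => main M h, ?_⟩
  have hne : {n : ℕ | ∃ h < H, ∃ M : DetMDP (fun _ => Fin (K + 1)) Bool,
      n = Creach M (allActiveClass K) h}.Nonempty := by
    let M0 : DetMDP (fun _ => Fin (K + 1)) Bool := ⟨0, fun _ _ _ => 0⟩
    exact ⟨Creach M0 (allActiveClass K) 0, 0, hH, M0, rfl⟩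
  refine csSup_le hne ?_
  rintro n ⟨h, hhH, M, rfl⟩
  calc Creach M (allActiveClass K) h ≤ (h + 1) * h + 2 := main M h
    _ ≤ H * (H - 1) + 2 := by
        have h1 : h + 1 ≤ H := hhH
        have h2 : h ≤ H - 1 := by omega
        exact Nat.add_le_add_right (Nat.mul_le_mul h1 h2) 2
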